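/- arXiv:1807.03081 — 2 statements merged into one kernel-verified Lean document; each statement's English description precedes it below -/
import Mathlib

section
/- Let (H_n)_{n≥1} be a family of complex Hilbert spaces and let H be their Hilbert space direct sum (the lp-sum with exponent 2), with each H_n identified with its canonical image in H and with the convention H_0 = {0}. Let 0 < q < 1, let r, s be positive natural numbers, and let a_1, …, a_r and b_1, …, b_s be bounded linear operators on H such that each of these operators is graded of degree +1 or −1, i.e. for each such operator T there is ε ∈ {+1, −1} with T(H_n) ⊆ H_{n+ε} for every n ≥ 1. Assume that for all 1 ≤ i ≤ r, 1 ≤ j ≤ s and all n ≥ 1, the restriction of the commutator [a_i, b_j] = a_i b_j − b_j a_i to H_n has operator norm at most q^n. Assume further that for each n ≥ 1 a finite-dimensional subspace K_n ⊆ H_n is given, and, writing K for the closed subspace of H generated by the K_n, that a_i(K) ⊆ K for all 1 ≤ i ≤ r − 1 and that a_r vanishes on K. Then there exists a constant C > 0, independent of n, such that for every n ≥ 1 and every ξ ∈ K_n one has ‖a_r ⋯ a_1 b_1 ⋯ b_s ξ‖ ≤ C q^n ‖ξ‖. -/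
open scoped ENNReal
set_option maxHeartbeats 1600000

/-- Let `(Hₙ)ₙ` be a family of complex Hilbert spaces (with the convention
`H₀ = {0}`, encoded by `Subsingleton (H 0)`) and let `lp H 2` be their Hilbert space direct
sum, each `Hₙ` being identified with its canonical image via `lp.single 2 n`. Let `0 < q < 1`,
let `r, s` be positive, and let `a₁, …, a_r, b₁, …, bₛ` be bounded operators on the direct sum,
each graded of degree `+1` or `−1` (it maps the image of `Hₙ` into the image of `H_{n+1}`
for all `n ≥ 1`, or into the image of `H_{n−1}` for all `n ≥ 1`). Assume the restriction of
each commutator `[aᵢ, bⱼ]` to the image of `Hₙ` has norm at most `q ^ n` for all `n ≥ 1`.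
Assume further that finite-dimensional subspaces `Kₙ ⊆ Hₙ` are given and, `Kc` being the
closed subspace of the direct sum generated by the (images of the) `Kₙ`, that
`aᵢ(Kc) ⊆ Kc` for `1 ≤ i ≤ r − 1` (here: indices `0, …, r−2`) and that `a_r` (here: the
index `r−1`) vanishes on `Kc`. Then there is a constant `C > 0`, independent of `n`, such
that for every `n ≥ 1` and every `ξ` in the image of `Kₙ`,
`‖a_r ⋯ a₁ b₁ ⋯ bₛ ξ‖ ≤ C * q ^ n * ‖ξ‖`.
(With `0`-based indices, `a_r ⋯ a₁ = (List.ofFn a).reverse.prod` and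
`b₁ ⋯ bₛ = (List.ofFn b).prod` as products in the ring of continuous linear maps.) -/
theorem graded_annihilation_estimate
    (H : ℕ → Type*) [∀ n, NormedAddCommGroup (H n)] [∀ n, InnerProductSpace ℂ (H n)]
    [∀ n, CompleteSpace (H n)] [Subsingleton (H 0)]
    (q : ℝ) (hq0 : 0 < q) (hq1 : q < 1)
    (r s : ℕ) (hr : 0 < r) (hs : 0 < s)
    (a : Fin r → (lp H 2 →L[ℂ] lp H 2)) (b : Fin s → (lp H 2 →L[ℂ] lp H 2))
    (hgraded : ∀ T ∈ Set.range a ∪ Set.range b,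
      (∀ n, 1 ≤ n → ∀ x : H n,
        T (lp.single 2 n x) ∈ Set.range (lp.single 2 (n + 1) : H (n + 1) → lp H 2)) ∨
      (∀ n, 1 ≤ n → ∀ x : H n,
        T (lp.single 2 n x) ∈ Set.range (lp.single 2 (n - 1) : H (n - 1) → lp H 2)))
    (hcomm : ∀ (i : Fin r) (j : Fin s) (n : ℕ), 1 ≤ n → ∀ x : H n,
      ‖(a i * b j - b j * a i) (lp.single 2 n x)‖ ≤ q ^ n * ‖lp.single 2 n x‖)
    (K : ∀ n, Submodule ℂ (H n)) (hKfin : ∀ n, 1 ≤ n → FiniteDimensional ℂ (K n))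
    (Kc : Submodule ℂ (lp H 2))
    (hKc : Kc = (Submodule.span ℂ
      (⋃ n ∈ {m : ℕ | 1 ≤ m}, lp.single 2 n '' ((K n : Set (H n))))).topologicalClosure)
    (hKinv : ∀ i : Fin r, (i : ℕ) < r - 1 → ∀ ξ ∈ Kc, a i ξ ∈ Kc)
    (hKlast : ∀ ξ ∈ Kc, a ⟨r - 1, by omega⟩ ξ = 0) :
    ∃ C > 0, ∀ n, 1 ≤ n → ∀ x : H n, x ∈ K n →
      ‖((List.ofFn a).reverse.prod * (List.ofFn b).prod) (lp.single 2 n x)‖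
        ≤ C * q ^ n * ‖lp.single 2 n x‖ := by
  classical
  -- replace r by r' + 1
  obtain ⟨r', rfl⟩ : ∃ r', r = r' + 1 := ⟨r - 1, by omega⟩
  have hq1' : q ≤ 1 := hq1.le
  have hq0' : (0:ℝ) ≤ q := hq0.le
  set M : ℝ := 1 + (∑ i, ‖a i‖) + (∑ j, ‖b j‖) with hMdef
  have hsa : (0:ℝ) ≤ ∑ i, ‖a i‖ := Finset.sum_nonneg fun i _ => norm_nonneg _
  have hsb : (0:ℝ) ≤ ∑ j, ‖b j‖ := Finset.sum_nonneg fun j _ => norm_nonneg _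
  have hM1 : (1:ℝ) ≤ M := by simp only [hMdef]; linarith
  have hM0 : (0:ℝ) ≤ M := le_trans zero_le_one hM1
  have hMT : ∀ T ∈ Set.range a ∪ Set.range b, ‖T‖ ≤ M := by
    rintro T (⟨i, rfl⟩ | ⟨j, rfl⟩)
    · have h1 : ‖a i‖ ≤ ∑ i, ‖a i‖ :=
        Finset.single_le_sum (fun i _ => norm_nonneg (a i)) (Finset.mem_univ i)
      simp only [hMdef]; linarith
    · have h1 : ‖b j‖ ≤ ∑ j, ‖b j‖ :=
        Finset.single_le_sum (fun j _ => norm_nonneg (b j)) (Finset.mem_univ j)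
      simp only [hMdef]; linarith
  have hMpow : ∀ k k' : ℕ, k ≤ k' → M ^ k ≤ M ^ k' := fun k k' h =>
    pow_le_pow_right₀ hM1 h
  have hqpow : ∀ k k' : ℕ, k ≤ k' → q ^ k' ≤ q ^ k := fun k k' h =>
    pow_le_pow_of_le_one hq0' hq1' h
  -- the single at index 0 is zero
  have hs0 : ∀ v ∈ Set.range (lp.single 2 0 : H 0 → lp H 2), v = 0 := by
    rintro v ⟨y, rfl⟩
    rw [Subsingleton.elim y ((0:ℂ) • (0 : H 0))]
    rw [lp.single_smul]
    simp
  -- grading step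
  have hstep : ∀ T ∈ Set.range a ∪ Set.range b, ∀ m : ℕ,
      ∀ v ∈ Set.range (lp.single 2 m : H m → lp H 2), ∃ m', m ≤ m' + 1 ∧
        T v ∈ Set.range (lp.single 2 m' : H m' → lp H 2) := by
    intro T hT m v hv
    rcases Nat.eq_zero_or_pos m with hm | hm
    · subst hm
      have hv0 : v = 0 := hs0 v hv
      refine ⟨0, by omega, ?_⟩
      rw [hv0, map_zero]
      exact ⟨(0:ℂ) • (0 : H 0), by rw [lp.single_smul]; simp⟩
    · obtain ⟨x, rfl⟩ := hv
      rcases hgraded T hT with h | h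
      · exact ⟨m + 1, by omega, h m hm x⟩
      · exact ⟨m - 1, by omega, h m hm x⟩
  -- gradedness and norm propagation along words
  have hG : ∀ l : List (lp H 2 →L[ℂ] lp H 2),
      (∀ T ∈ l, T ∈ Set.range a ∪ Set.range b) → ∀ m : ℕ,
      ∀ v ∈ Set.range (lp.single 2 m : H m → lp H 2), ∃ m', m ≤ m' + l.length ∧
        l.prod v ∈ Set.range (lp.single 2 m' : H m' → lp H 2) ∧
        ‖l.prod v‖ ≤ M ^ l.length * ‖v‖ := by
    intro l
    induction l with
    | nil =>
      intro _ m v hv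
      exact ⟨m, by simp, by simpa using hv, by simp⟩
    | cons T l ih =>
      intro hl m v hv
      obtain ⟨m', h1, h2, h3⟩ := ih (fun S hS => hl S (List.mem_cons_of_mem _ hS)) m v hv
      have hTmem : T ∈ Set.range a ∪ Set.range b := hl T (List.mem_cons_self)
      obtain ⟨m'', h4, h5⟩ := hstep T hTmem m' _ h2
      refine ⟨m'', by simp only [List.length_cons]; omega, ?_, ?_⟩
      · simpa [List.prod_cons, ContinuousLinearMap.mul_apply] using h5
      · have : ‖(T :: l).prod v‖ = ‖T (l.prod v)‖ := by
          rw [List.prod_cons, ContinuousLinearMap.mul_apply]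
        rw [this, List.length_cons, pow_succ]
        calc ‖T (l.prod v)‖ ≤ ‖T‖ * ‖l.prod v‖ := T.le_opNorm _
          _ ≤ M * (M ^ l.length * ‖v‖) :=
            mul_le_mul (hMT T hTmem) h3 (norm_nonneg _) hM0
          _ = M ^ l.length * M * ‖v‖ := by ring
  -- single commutator estimate
  have hC1 : ∀ aa ∈ Set.range a, ∀ bb ∈ Set.range b, ∀ m : ℕ,
      ∀ v ∈ Set.range (lp.single 2 m : H m → lp H 2),
      ‖(aa * bb - bb * aa) v‖ ≤ q ^ m * ‖v‖ := by
    rintro aa ⟨i, rfl⟩ bb ⟨j, rfl⟩ m v hv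
    rcases Nat.eq_zero_or_pos m with hm | hm
    · subst hm
      rw [hs0 v hv]
      simp
    · obtain ⟨x, rfl⟩ := hv
      exact hcomm i j m hm x
  -- commutator of an a-word with a single b
  have hE : ∀ la : List (lp H 2 →L[ℂ] lp H 2), (∀ T ∈ la, T ∈ Set.range a) →
      ∀ bb ∈ Set.range b, ∀ m : ℕ,
      ∀ v ∈ Set.range (lp.single 2 m : H m → lp H 2),
      ‖(la.prod * bb - bb * la.prod) v‖
        ≤ (la.length : ℝ) * M ^ la.length * q ^ (m - la.length) * ‖v‖ := by
    intro la
    induction la with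
    | nil => intro _ bb hbb m v hv; simp
    | cons a0 la ih =>
      intro hla bb hbb m v hv
      have ha0 : a0 ∈ Set.range a := hla a0 (List.mem_cons_self)
      have hla' : ∀ T ∈ la, T ∈ Set.range a := fun T h => hla T (List.mem_cons_of_mem _ h)
      set L := la.length with hL
      set P := la.prod with hP
      have key : ((a0 :: la).prod * bb - bb * (a0 :: la).prod) v
          = a0 ((P * bb - bb * P) v) + ((a0 * bb - bb * a0) (P v)) := by
        have h : (a0 :: la).prod * bb - bb * (a0 :: la).prod
            = a0 * (P * bb - bb * P) + (a0 * bb - bb * a0) * P := by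
          rw [List.prod_cons]; noncomm_ring
        rw [h]
        simp [ContinuousLinearMap.add_apply, ContinuousLinearMap.mul_apply]
      obtain ⟨m', hm', hPv, hPnorm⟩ := hG la (fun T h => Or.inl (hla' T h)) m v hv
      have h1 : ‖a0 ((P * bb - bb * P) v)‖
          ≤ M * ((L : ℝ) * M ^ L * q ^ (m - L) * ‖v‖) := by
        calc ‖a0 ((P * bb - bb * P) v)‖ ≤ ‖a0‖ * ‖(P * bb - bb * P) v‖ := a0.le_opNorm _
          _ ≤ M * ((L : ℝ) * M ^ L * q ^ (m - L) * ‖v‖) :=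
            mul_le_mul (hMT a0 (Or.inl ha0)) (ih hla' bb hbb m v hv) (norm_nonneg _) hM0
      have h2 : ‖(a0 * bb - bb * a0) (P v)‖ ≤ M ^ L * q ^ (m - (L + 1)) * ‖v‖ := by
        calc ‖(a0 * bb - bb * a0) (P v)‖ ≤ q ^ m' * ‖P v‖ := hC1 a0 ha0 bb hbb m' _ hPv
          _ ≤ q ^ (m - (L + 1)) * (M ^ L * ‖v‖) :=
            mul_le_mul (hqpow _ _ (by omega)) hPnorm (norm_nonneg _) (pow_nonneg hq0' _)
          _ = M ^ L * q ^ (m - (L + 1)) * ‖v‖ := by ring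
      have e1 : q ^ (m - L) ≤ q ^ (m - (L + 1)) := hqpow _ _ (by omega)
      have e2 : (0:ℝ) ≤ q ^ (m - (L + 1)) := pow_nonneg hq0' _
      have e3 : (0:ℝ) ≤ M ^ L := pow_nonneg hM0 _
      have e4 : (0:ℝ) ≤ ‖v‖ := norm_nonneg _
      have e5 : (0:ℝ) ≤ (L : ℝ) := Nat.cast_nonneg _
      calc ‖((a0 :: la).prod * bb - bb * (a0 :: la).prod) v‖
          = ‖a0 ((P * bb - bb * P) v) + ((a0 * bb - bb * a0) (P v))‖ := by rw [key]
        _ ≤ ‖a0 ((P * bb - bb * P) v)‖ + ‖(a0 * bb - bb * a0) (P v)‖ := norm_add_le _ _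
        _ ≤ M * ((L : ℝ) * M ^ L * q ^ (m - L) * ‖v‖) + M ^ L * q ^ (m - (L + 1)) * ‖v‖ :=
            add_le_add h1 h2
        _ ≤ ((L : ℝ) + 1) * (M ^ L * M) * q ^ (m - (L + 1)) * ‖v‖ := by
            nlinarith [mul_nonneg (mul_nonneg e5 e3) (mul_nonneg e2 e4),
              mul_nonneg e3 (mul_nonneg e2 e4),
              mul_le_mul_of_nonneg_left e1 (mul_nonneg (mul_nonneg e5 e3) e4),
              mul_nonneg (mul_nonneg (mul_nonneg e5 e3) e4) (sub_nonneg.mpr e1)]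
        _ = ((a0 :: la).length : ℝ) * M ^ (a0 :: la).length
              * q ^ (m - (a0 :: la).length) * ‖v‖ := by
            simp [List.length_cons, pow_succ, hL]
  -- the full a-word
  set A : lp H 2 →L[ℂ] lp H 2 := (List.ofFn a).reverse.prod with hA
  have hAlen : (List.ofFn a).reverse.length = r' + 1 := by simp
  have hAmem : ∀ T ∈ (List.ofFn a).reverse, T ∈ Set.range a := by
    intro T hT
    rw [List.mem_reverse] at hT
    exact List.mem_ofFn.mp hT
  have hEA : ∀ bb ∈ Set.range b, ∀ m : ℕ,
      ∀ v ∈ Set.range (lp.single 2 m : H m → lp H 2),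
      ‖(A * bb - bb * A) v‖ ≤ ((r' + 1 : ℕ) : ℝ) * M ^ (r' + 1) * q ^ (m - (r' + 1)) * ‖v‖ := by
    intro bb hbb m v hv
    have := hE (List.ofFn a).reverse hAmem bb hbb m v hv
    rwa [hAlen] at this
  -- commutator of the a-word with a b-word
  have hF : ∀ lb : List (lp H 2 →L[ℂ] lp H 2), (∀ T ∈ lb, T ∈ Set.range b) →
      ∀ m : ℕ, ∀ v ∈ Set.range (lp.single 2 m : H m → lp H 2),
      ‖(A * lb.prod - lb.prod * A) v‖
        ≤ ((r' + 1 : ℕ) : ℝ) * (lb.length : ℝ) * M ^ (r' + 1 + lb.length)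
            * q ^ (m - (r' + 1 + lb.length)) * ‖v‖ := by
    intro lb
    induction lb with
    | nil => intro _ m v hv; simp
    | cons b0 lb ih =>
      intro hlb m v hv
      have hb0 : b0 ∈ Set.range b := hlb b0 (List.mem_cons_self)
      have hlb' : ∀ T ∈ lb, T ∈ Set.range b := fun T h => hlb T (List.mem_cons_of_mem _ h)
      set L := lb.length with hL
      set Q := lb.prod with hQ
      have key : (A * (b0 :: lb).prod - (b0 :: lb).prod * A) v
          = ((A * b0 - b0 * A) (Q v)) + b0 ((A * Q - Q * A) v) := by
        have h : A * (b0 :: lb).prod - (b0 :: lb).prod * A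
            = (A * b0 - b0 * A) * Q + b0 * (A * Q - Q * A) := by
          rw [List.prod_cons]; noncomm_ring
        rw [h]
        simp [ContinuousLinearMap.add_apply, ContinuousLinearMap.mul_apply]
      obtain ⟨m', hm', hQv, hQnorm⟩ := hG lb (fun T h => Or.inr (hlb' T h)) m v hv
      have h1 : ‖(A * b0 - b0 * A) (Q v)‖
          ≤ ((r' + 1 : ℕ) : ℝ) * M ^ (r' + 1) * q ^ (m - (r' + 1 + L + 1)) * (M ^ L * ‖v‖) := by
        calc ‖(A * b0 - b0 * A) (Q v)‖
            ≤ ((r' + 1 : ℕ) : ℝ) * M ^ (r' + 1) * q ^ (m' - (r' + 1)) * ‖Q v‖ :=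
              hEA b0 hb0 m' _ hQv
          _ ≤ ((r' + 1 : ℕ) : ℝ) * M ^ (r' + 1) * q ^ (m - (r' + 1 + L + 1)) * (M ^ L * ‖v‖) := by
              refine mul_le_mul ?_ hQnorm (norm_nonneg _) ?_
              · refine mul_le_mul_of_nonneg_left (hqpow _ _ (by omega)) ?_
                exact mul_nonneg (Nat.cast_nonneg _) (pow_nonneg hM0 _)
              · exact mul_nonneg (mul_nonneg (Nat.cast_nonneg _) (pow_nonneg hM0 _))
                  (pow_nonneg hq0' _)
      have h2 : ‖b0 ((A * Q - Q * A) v)‖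
          ≤ M * (((r' + 1 : ℕ) : ℝ) * (L : ℝ) * M ^ (r' + 1 + L)
              * q ^ (m - (r' + 1 + L)) * ‖v‖) := by
        calc ‖b0 ((A * Q - Q * A) v)‖ ≤ ‖b0‖ * ‖(A * Q - Q * A) v‖ := b0.le_opNorm _
          _ ≤ M * (((r' + 1 : ℕ) : ℝ) * (L : ℝ) * M ^ (r' + 1 + L)
              * q ^ (m - (r' + 1 + L)) * ‖v‖) :=
            mul_le_mul (hMT b0 (Or.inr hb0)) (ih hlb' m v hv) (norm_nonneg _) hM0
      have e1 : q ^ (m - (r' + 1 + L)) ≤ q ^ (m - (r' + 1 + L + 1)) := hqpow _ _ (by omega)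
      have e2 : (0:ℝ) ≤ q ^ (m - (r' + 1 + L + 1)) := pow_nonneg hq0' _
      have e3 : (0:ℝ) ≤ M ^ (r' + 1 + L) := pow_nonneg hM0 _
      have e3' : (0:ℝ) ≤ M ^ (r' + 1) := pow_nonneg hM0 _
      have e3'' : (0:ℝ) ≤ M ^ L := pow_nonneg hM0 _
      have e4 : (0:ℝ) ≤ ‖v‖ := norm_nonneg _
      have e5 : (0:ℝ) ≤ ((r' + 1 : ℕ) : ℝ) := Nat.cast_nonneg _
      have e6 : (0:ℝ) ≤ (L : ℝ) := Nat.cast_nonneg _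
      have epow : M ^ (r' + 1) * M ^ L = M ^ (r' + 1 + L) := by rw [← pow_add]
      calc ‖(A * (b0 :: lb).prod - (b0 :: lb).prod * A) v‖
          = ‖((A * b0 - b0 * A) (Q v)) + b0 ((A * Q - Q * A) v)‖ := by rw [key]
        _ ≤ ‖(A * b0 - b0 * A) (Q v)‖ + ‖b0 ((A * Q - Q * A) v)‖ := norm_add_le _ _
        _ ≤ ((r' + 1 : ℕ) : ℝ) * M ^ (r' + 1) * q ^ (m - (r' + 1 + L + 1)) * (M ^ L * ‖v‖)
            + M * (((r' + 1 : ℕ) : ℝ) * (L : ℝ) * M ^ (r' + 1 + L)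
              * q ^ (m - (r' + 1 + L)) * ‖v‖) := add_le_add h1 h2
        _ = ((r' + 1 : ℕ) : ℝ) * M ^ (r' + 1 + L) * q ^ (m - (r' + 1 + L + 1)) * ‖v‖
            + M * (((r' + 1 : ℕ) : ℝ) * (L : ℝ) * M ^ (r' + 1 + L)
              * q ^ (m - (r' + 1 + L)) * ‖v‖) := by ring
        _ ≤ ((r' + 1 : ℕ) : ℝ) * ((L : ℝ) + 1) * (M ^ (r' + 1 + L) * M)
              * q ^ (m - (r' + 1 + L + 1)) * ‖v‖ := by
            nlinarith [mul_nonneg (mul_nonneg (mul_nonneg (mul_nonneg e5 e3) e2) e4)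
                (sub_nonneg.mpr hM1),
              mul_nonneg (mul_nonneg (mul_nonneg (mul_nonneg (mul_nonneg e5 e6) e3) hM0) e4)
                (sub_nonneg.mpr e1)]
        _ = ((r' + 1 : ℕ) : ℝ) * ((b0 :: lb).length : ℝ) * M ^ (r' + 1 + (b0 :: lb).length)
              * q ^ (m - (r' + 1 + (b0 :: lb).length)) * ‖v‖ := by
            simp only [List.length_cons, ← hL]
            rw [show r' + 1 + (L + 1) = r' + 1 + L + 1 from by omega, pow_succ]
            push_cast
            ring
  -- products of Kc-preserving operators preserve Kc
  have hKpres : ∀ l : List (lp H 2 →L[ℂ] lp H 2),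
      (∀ T ∈ l, ∀ ξ ∈ Kc, T ξ ∈ Kc) → ∀ ξ ∈ Kc, l.prod ξ ∈ Kc := by
    intro l
    induction l with
    | nil => intro _ ξ hξ; simpa using hξ
    | cons T l ih =>
      intro hl ξ hξ
      have h1 : l.prod ξ ∈ Kc := ih (fun S hS => hl S (List.mem_cons_of_mem _ hS)) ξ hξ
      have h2 := hl T (List.mem_cons_self) _ h1
      simpa [List.prod_cons, ContinuousLinearMap.mul_apply] using h2
  -- the a-word annihilates Kc
  have hAnn : ∀ ξ ∈ Kc, A ξ = 0 := by
    intro ξ hξ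
    have hsplit : (List.ofFn a).reverse
        = a (Fin.last r') :: (List.ofFn (fun i : Fin r' => a i.castSucc)).reverse := by
      rw [List.ofFn_succ']
      simp [List.reverse_concat]
    have hmem : (List.ofFn (fun i : Fin r' => a i.castSucc)).reverse.prod ξ ∈ Kc := by
      refine hKpres _ ?_ ξ hξ
      intro T hT ζ hζ
      rw [List.mem_reverse] at hT
      obtain ⟨i, hi⟩ := List.mem_ofFn.mp hT
      rw [← hi]
      exact hKinv i.castSucc (by simpa using i.isLt) ζ hζ
    have hlast : a ⟨r' + 1 - 1, by omega⟩ = a (Fin.last r') := by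
      congr 1
    rw [hA, hsplit, List.prod_cons, ContinuousLinearMap.mul_apply,
      ← hlast]
    exact hKlast _ hmem
  -- assemble the constant
  set k : ℕ := r' + 1 + s with hk
  refine ⟨((r' + 1 : ℕ) : ℝ) * (s : ℝ) * M ^ k / q ^ k + 1, by positivity, ?_⟩
  intro n hn x hx
  have hξKc : lp.single 2 n x ∈ Kc := by
    rw [hKc]
    apply Submodule.le_topologicalClosure
    apply Submodule.subset_span
    exact Set.mem_biUnion hn ⟨x, hx, rfl⟩
  have hAnn' : A (lp.single 2 n x) = 0 := hAnn _ hξKc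
  set B : lp H 2 →L[ℂ] lp H 2 := (List.ofFn b).prod with hB
  have hrw : (A * B) (lp.single 2 n x) = (A * B - B * A) (lp.single 2 n x) := by
    simp [ContinuousLinearMap.sub_apply, ContinuousLinearMap.mul_apply, hAnn']
  have hmemB : ∀ T ∈ List.ofFn b, T ∈ Set.range b := by
    intro T hT; exact List.mem_ofFn.mp hT
  have hbound := hF (List.ofFn b) hmemB n (lp.single 2 n x) ⟨x, rfl⟩
  rw [List.length_ofFn] at hbound
  have hqk : q ^ (n - k) ≤ q ^ n / q ^ k := by
    rw [le_div_iff₀ (pow_pos hq0 k), ← pow_add]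
    exact hqpow n (n - k + k) (by omega)
  have hnn : (0:ℝ) ≤ ((r' + 1 : ℕ) : ℝ) * (s : ℝ) * M ^ k :=
    mul_nonneg (mul_nonneg (Nat.cast_nonneg _) (Nat.cast_nonneg _)) (pow_nonneg hM0 _)
  have hqn : (0:ℝ) ≤ q ^ n := pow_nonneg hq0' _
  have hvv : (0:ℝ) ≤ ‖lp.single 2 n x‖ := norm_nonneg _
  calc ‖(A * B) (lp.single 2 n x)‖ = ‖(A * B - B * A) (lp.single 2 n x)‖ := by rw [hrw]
    _ ≤ ((r' + 1 : ℕ) : ℝ) * (s : ℝ) * M ^ (r' + 1 + s) * q ^ (n - (r' + 1 + s))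
          * ‖lp.single 2 n x‖ := hbound
    _ = ((r' + 1 : ℕ) : ℝ) * (s : ℝ) * M ^ k * q ^ (n - k) * ‖lp.single 2 n x‖ := by rw [hk]
    _ ≤ ((r' + 1 : ℕ) : ℝ) * (s : ℝ) * M ^ k * (q ^ n / q ^ k) * ‖lp.single 2 n x‖ := by
        have := mul_le_mul_of_nonneg_left hqk hnn
        exact mul_le_mul_of_nonneg_right this hvv
    _ ≤ (((r' + 1 : ℕ) : ℝ) * (s : ℝ) * M ^ k / q ^ k + 1) * q ^ n * ‖lp.single 2 n x‖ := by
        have h1 : ((r' + 1 : ℕ) : ℝ) * (s : ℝ) * M ^ k * (q ^ n / q ^ k)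
            = (((r' + 1 : ℕ) : ℝ) * (s : ℝ) * M ^ k / q ^ k) * q ^ n := by ring
        rw [h1]
        have h2 : (((r' + 1 : ℕ) : ℝ) * (s : ℝ) * M ^ k / q ^ k) * q ^ n
            ≤ (((r' + 1 : ℕ) : ℝ) * (s : ℝ) * M ^ k / q ^ k + 1) * q ^ n := by
          apply mul_le_mul_of_nonneg_right _ hqn
          linarith
        exact mul_le_mul_of_nonneg_right h2 hvv
end

section
/- Let (H_n)_{n≥1} be a family of complex Hilbert spaces and let H be their Hilbert space direct sum (the lp-sum with exponent 2), with each H_n identified with its canonical image in H and with the convention H_0 = {0}. Let 0 < q < 1, let r, s be positive natural numbers, and let a_1, …, a_r and b_1, …, b_s be bounded linear operators on H such that each of these operators is graded of degree +1 or −1, i.e. for each such operator T there is ε ∈ {+1, −1} with T(H_n) ⊆ H_{n+ε} for every n ≥ 1. Assume that for all 1 ≤ i ≤ r, 1 ≤ j ≤ s and all n ≥ 1, the restriction of the commutator [a_i, b_j] = a_i b_j − b_j a_i to H_n has operator norm at most q^n. Then there exists a constant C > 0, independent of n, such that for every n ≥ 1 and every ξ ∈ H_n one has ‖a_r ⋯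 a_1 b_1 ⋯ b_s ξ − b_1 ⋯ b_s a_r ⋯ a_1 ξ‖ ≤ C q^n ‖ξ‖. -/
open scoped ENNReal

section Aux

variable {H : ℕ → Type*} [∀ n, NormedAddCommGroup (H n)] [∀ n, InnerProductSpace ℂ (H n)]
  [∀ n, CompleteSpace (H n)] [Subsingleton (H 0)] {q : ℝ}

/-- An operator maps each image of `Hₙ` (`n ≥ 1`) into the image of `H_{n+1}` or `H_{n-1}`. -/
def GradedOp (T : lp H 2 →L[ℂ] lp H 2) : Prop :=
  ∀ n, 1 ≤ n → ∀ x : H n,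
    T (lp.single 2 n x) ∈ Set.range (lp.single 2 (n + 1) : H (n + 1) → lp H 2) ∨
    T (lp.single 2 n x) ∈ Set.range (lp.single 2 (n - 1) : H (n - 1) → lp H 2)

/-- An operator whose restriction to the image of `Hₙ` has norm `O(qⁿ)`. -/
def GoodOp (q : ℝ) (T : lp H 2 →L[ℂ] lp H 2) : Prop :=
  ∃ c : ℝ, 0 ≤ c ∧ ∀ n, 1 ≤ n → ∀ x : H n,
    ‖T (lp.single 2 n x)‖ ≤ c * q ^ n * ‖lp.single 2 n x‖

theorem single_zero_eq_zero (y : H 0) : (lp.single 2 0 y : lp H 2) = 0 := by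
  have hy : y = (0 : H 0) := Subsingleton.elim _ _
  subst hy
  have h := lp.norm_single (p := 2) (E := H) (by norm_num) 0 (0 : H 0)
  exact norm_eq_zero.mp (by simpa using h)

theorem goodOp_zero : GoodOp q (0 : lp H 2 →L[ℂ] lp H 2) :=
  ⟨0, le_refl _, by intro n hn x; simp⟩

theorem goodOp_add {T S : lp H 2 →L[ℂ] lp H 2} (hT : GoodOp q T) (hS : GoodOp q S) :
    GoodOp q (T + S) := by
  obtain ⟨c1, hc1, h1⟩ := hT
  obtain ⟨c2, hc2, h2⟩ := hS
  refine ⟨c1 + c2, by positivity, fun n hn x => ?_⟩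
  have := norm_add_le (T (lp.single 2 n x)) (S (lp.single 2 n x))
  have h1' := h1 n hn x
  have h2' := h2 n hn x
  simp only [ContinuousLinearMap.add_apply]
  nlinarith [this, h1', h2']

theorem goodOp_mul_left (S : lp H 2 →L[ℂ] lp H 2) {T : lp H 2 →L[ℂ] lp H 2}
    (hT : GoodOp q T) : GoodOp q (S * T) := by
  obtain ⟨c, hc0, hc⟩ := hT
  refine ⟨‖S‖ * c, by positivity, fun n hn x => ?_⟩
  calc ‖(S * T) (lp.single 2 n x)‖ = ‖S (T (lp.single 2 n x))‖ := rfl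
    _ ≤ ‖S‖ * ‖T (lp.single 2 n x)‖ := S.le_opNorm _
    _ ≤ ‖S‖ * (c * q ^ n * ‖lp.single 2 n x‖) :=
        mul_le_mul_of_nonneg_left (hc n hn x) (norm_nonneg S)
    _ = ‖S‖ * c * q ^ n * ‖lp.single 2 n x‖ := by ring

theorem goodOp_mul_right (hq0 : 0 < q) (hq1 : q ≤ 1) {S T : lp H 2 →L[ℂ] lp H 2}
    (hS : GradedOp S) (hT : GoodOp q T) : GoodOp q (T * S) := by
  obtain ⟨c, hc0, hc⟩ := hT
  refine ⟨c * ‖S‖ / q, by positivity, fun n hn x => ?_⟩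
  set ξ := lp.single 2 n x with hξ
  have hSnorm : ‖S ξ‖ ≤ ‖S‖ * ‖ξ‖ := S.le_opNorm ξ
  have key : ∀ m : ℕ, 1 ≤ m → n ≤ m + 1 → ∀ y : H m, lp.single 2 m y = S ξ →
      ‖(T * S) ξ‖ ≤ c * ‖S‖ / q * q ^ n * ‖ξ‖ := by
    intro m hm hmn y hy
    have hqm : q ^ m ≤ q ^ n / q := by
      rw [le_div_iff₀ hq0, ← pow_succ]
      exact pow_le_pow_of_le_one hq0.le hq1 hmn
    have h1 := hc m hm y
    rw [hy] at h1
    calc ‖(T * S) ξ‖ = ‖T (S ξ)‖ := rfl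
      _ ≤ c * q ^ m * ‖S ξ‖ := h1
      _ ≤ c * (q ^ n / q) * (‖S‖ * ‖ξ‖) := by
          apply mul_le_mul (mul_le_mul_of_nonneg_left hqm hc0) hSnorm (norm_nonneg _)
            (by positivity)
      _ = c * ‖S‖ / q * q ^ n * ‖ξ‖ := by ring
  rcases hS n hn x with ⟨y, hy⟩ | ⟨y, hy⟩
  · exact key (n + 1) (by omega) (by omega) y hy
  · by_cases h1 : n = 1
    · subst h1
      have hzero : S ξ = 0 := by rw [← hy]; exact single_zero_eq_zero y
      have : (T * S) ξ = 0 := by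
        show T (S ξ) = 0
        rw [hzero, map_zero]
      rw [this, norm_zero]
      positivity
    · exact key (n - 1) (by omega) (by omega) y hy

theorem goodOp_mul_prod_right (hq0 : 0 < q) (hq1 : q ≤ 1) (L : List (lp H 2 →L[ℂ] lp H 2))
    (hL : ∀ S ∈ L, GradedOp S) {T : lp H 2 →L[ℂ] lp H 2} (hT : GoodOp q T) :
    GoodOp q (T * L.prod) := by
  induction L generalizing T with
  | nil => simpa using hT
  | cons S L ih =>
    have h : T * (S :: L).prod = (T * S) * L.prod := by rw [List.prod_cons, mul_assoc]
    rw [h]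
    exact ih (fun x hx => hL x (List.mem_cons_of_mem _ hx))
      (goodOp_mul_right hq0 hq1 (hL S (List.mem_cons_self)) hT)

theorem goodOp_comm_single (hq0 : 0 < q) (hq1 : q ≤ 1) (x : lp H 2 →L[ℂ] lp H 2)
    (L : List (lp H 2 →L[ℂ] lp H 2))
    (hL : ∀ S ∈ L, GradedOp S ∧ GoodOp q (x * S - S * x)) :
    GoodOp q (x * L.prod - L.prod * x) := by
  induction L with
  | nil => simpa using (goodOp_zero (H := H) (q := q))
  | cons y L ih =>
    have hID : x * (y :: L).prod - (y :: L).prod * x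
        = y * (x * L.prod - L.prod * x) + (x * y - y * x) * L.prod := by
      rw [List.prod_cons]; noncomm_ring
    rw [hID]
    refine goodOp_add (goodOp_mul_left _ (ih fun S hS => hL S (List.mem_cons_of_mem _ hS))) ?_
    exact goodOp_mul_prod_right hq0 hq1 L (fun S hS => (hL S (List.mem_cons_of_mem _ hS)).1)
      (hL y (List.mem_cons_self)).2

theorem goodOp_comm_prod (hq0 : 0 < q) (hq1 : q ≤ 1)
    (Lb : List (lp H 2 →L[ℂ] lp H 2)) (hLb : ∀ S ∈ Lb, GradedOp S)
    (La : List (lp H 2 →L[ℂ] lp H 2)) (hLa : ∀ T ∈ La, GradedOp T)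
    (hcomm : ∀ T ∈ La, ∀ S ∈ Lb, GoodOp q (T * S - S * T)) :
    GoodOp q (La.prod * Lb.prod - Lb.prod * La.prod) := by
  induction La with
  | nil => simpa using (goodOp_zero (H := H) (q := q))
  | cons x La ih =>
    have hID : (x :: La).prod * Lb.prod - Lb.prod * (x :: La).prod
        = x * (La.prod * Lb.prod - Lb.prod * La.prod)
          + (x * Lb.prod - Lb.prod * x) * La.prod := by
      rw [List.prod_cons]; noncomm_ring
    rw [hID]
    refine goodOp_add (goodOp_mul_left _ (ih (fun T hT => hLa T (List.mem_cons_of_mem _ hT))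
      (fun T hT => hcomm T (List.mem_cons_of_mem _ hT)))) ?_
    refine goodOp_mul_prod_right hq0 hq1 La (fun T hT => hLa T (List.mem_cons_of_mem _ hT)) ?_
    exact goodOp_comm_single hq0 hq1 x Lb
      (fun S hS => ⟨hLb S hS, hcomm x (List.mem_cons_self) S hS⟩)

end Aux

/-- Let `(Hₙ)ₙ` be a family of complex Hilbert spaces (with the convention
`H₀ = {0}`, encoded by `Subsingleton (H 0)`) and let `lp H 2` be their Hilbert space direct
sum, each `Hₙ` being identified with its canonical image via `lp.single 2 n`. Let `0 < q < 1`,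
let `r, s` be positive, and let `a₁, …, a_r, b₁, …, bₛ` be bounded operators on the direct sum,
each graded of degree `+1` or `−1` (it maps the image of `Hₙ` into the image of `H_{n+1}`
for all `n ≥ 1`, or into the image of `H_{n−1}` for all `n ≥ 1`). Assume the restriction of
each commutator `[aᵢ, bⱼ]` to the image of `Hₙ` has norm at most `q ^ n` for all `n ≥ 1`.
Then there is a constant `C > 0`, independent of `n`, such that for every `n ≥ 1` and every
`ξ` in the image of `Hₙ`,
`‖a_r ⋯ a₁ b₁ ⋯ bₛ ξ − b₁ ⋯ bₛ a_r ⋯ a₁ ξ‖ ≤ C * q ^ n * ‖ξ‖`.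
(The products of operators are compositions, realized as products in the ring of continuous
linear maps; with `0`-based indices, `a_r ⋯ a₁ = (List.ofFn a).reverse.prod` and
`b₁ ⋯ bₛ = (List.ofFn b).prod`.) -/
theorem graded_commutator_estimate
    (H : ℕ → Type*) [∀ n, NormedAddCommGroup (H n)] [∀ n, InnerProductSpace ℂ (H n)]
    [∀ n, CompleteSpace (H n)] [Subsingleton (H 0)]
    (q : ℝ) (hq0 : 0 < q) (hq1 : q < 1)
    (r s : ℕ) (hr : 0 < r) (hs : 0 < s)
    (a : Fin r → (lp H 2 →L[ℂ] lp H 2)) (b : Fin s → (lp H 2 →L[ℂ] lp H 2))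
    (hgraded : ∀ T ∈ Set.range a ∪ Set.range b,
      (∀ n, 1 ≤ n → ∀ x : H n,
        T (lp.single 2 n x) ∈ Set.range (lp.single 2 (n + 1) : H (n + 1) → lp H 2)) ∨
      (∀ n, 1 ≤ n → ∀ x : H n,
        T (lp.single 2 n x) ∈ Set.range (lp.single 2 (n - 1) : H (n - 1) → lp H 2)))
    (hcomm : ∀ (i : Fin r) (j : Fin s) (n : ℕ), 1 ≤ n → ∀ x : H n,
      ‖(a i * b j - b j * a i) (lp.single 2 n x)‖ ≤ q ^ n * ‖lp.single 2 n x‖) :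
    ∃ C > 0, ∀ n, 1 ≤ n → ∀ x : H n,
      ‖((List.ofFn a).reverse.prod * (List.ofFn b).prod) (lp.single 2 n x) -
          ((List.ofFn b).prod * (List.ofFn a).reverse.prod) (lp.single 2 n x)‖
        ≤ C * q ^ n * ‖lp.single 2 n x‖ := by
  have hgr : ∀ T ∈ Set.range a ∪ Set.range b, GradedOp T := by
    intro T hT
    rcases hgraded T hT with h | h
    · intro n hn x; exact Or.inl (h n hn x)
    · intro n hn x; exact Or.inr (h n hn x)
  have hLb : ∀ S ∈ List.ofFn b, GradedOp S := by
    intro S hS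
    obtain ⟨j, rfl⟩ := List.mem_ofFn.mp hS
    exact hgr _ (Or.inr ⟨j, rfl⟩)
  have hLa : ∀ T ∈ (List.ofFn a).reverse, GradedOp T := by
    intro T hT
    obtain ⟨i, rfl⟩ := List.mem_ofFn.mp (List.mem_reverse.mp hT)
    exact hgr _ (Or.inl ⟨i, rfl⟩)
  have hcomm' : ∀ T ∈ (List.ofFn a).reverse, ∀ S ∈ List.ofFn b, GoodOp q (T * S - S * T) := by
    intro T hT S hS
    obtain ⟨i, rfl⟩ := List.mem_ofFn.mp (List.mem_reverse.mp hT)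
    obtain ⟨j, rfl⟩ := List.mem_ofFn.mp hS
    exact ⟨1, zero_le_one, fun n hn x => by simpa using hcomm i j n hn x⟩
  obtain ⟨c, hc0, hc⟩ :=
    goodOp_comm_prod hq0 hq1.le (List.ofFn b) hLb (List.ofFn a).reverse hLa hcomm'
  refine ⟨c + 1, by positivity, fun n hn x => ?_⟩
  have h := hc n hn x
  have hnn : 0 ≤ q ^ n * ‖lp.single 2 n x‖ := by positivity
  calc ‖((List.ofFn a).reverse.prod * (List.ofFn b).prod) (lp.single 2 n x) -
          ((List.ofFn b).prod * (List.ofFn a).reverse.prod) (lp.single 2 n x)‖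
      = ‖((List.ofFn a).reverse.prod * (List.ofFn b).prod -
          (List.ofFn b).prod * (List.ofFn a).reverse.prod) (lp.single 2 n x)‖ := by
        rw [ContinuousLinearMap.sub_apply]
    _ ≤ c * q ^ n * ‖lp.single 2 n x‖ := h
    _ ≤ (c + 1) * q ^ n * ‖lp.single 2 n x‖ := by nlinarith
end
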